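/- Let n < m. The embryo model Z₀(n,m) : ℝⁿ → ℝᵐ defined by Z₀(y,z) = (y, z³ + 3|y|²z, ∫₀ᶻ (s² + |y|²)² ds, 0, …, 0) is injective on all of ℝⁿ, and its derivative at (y,z) is an injective linear map ℝⁿ → ℝᵐ if and only if (y,z) ≠ (0,0); that is, the singular set of Z₀(n,m) is exactly the origin. -/

import Mathlib

/-- The embryo model `Z₀(n,m) : ℝⁿ → ℝᵐ`,
`Z₀(y,z) = (y, z³ + 3|y|²z, ∫₀ᶻ (s² + |y|²)² ds, 0, …, 0)`,
where `ℝⁿ = ℝ^{n−1} × ℝ` (so `k = n−1`) and the trailing zeros are collected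
in a Euclidean factor (so `l = m − n − 1`). -/
noncomputable def Z0map (k l : ℕ) (p : EuclideanSpace ℝ (Fin k) × ℝ) :
    EuclideanSpace ℝ (Fin k) × ℝ × ℝ × EuclideanSpace ℝ (Fin l) :=
  (p.1, p.2^3 + 3*‖p.1‖^2*p.2, ∫ s in (0:ℝ)..p.2, (s^2 + ‖p.1‖^2)^2, 0)

lemma Z0map_eq (k l : ℕ) : Z0map k l = fun p =>
    (p.1, p.2^3 + 3*‖p.1‖^2*p.2,
      (1/5)*p.2^5 + (2/3)*‖p.1‖^2*p.2^3 + (‖p.1‖^2)^2*p.2, 0) := by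
  funext p
  set c := ‖p.1‖^2 with hc
  simp only [Z0map, Prod.mk.injEq, true_and, and_true]
  rw [intervalIntegral.integral_congr (g := fun s => s^4 + (2*c)*s^2 + c^2)
    (fun s _ => by ring)]
  rw [intervalIntegral.integral_add ((by fun_prop : Continuous fun s:ℝ => s^4 + (2*c)*s^2).intervalIntegrable _ _)
      ((by fun_prop : Continuous fun s:ℝ => c^2).intervalIntegrable _ _),
    intervalIntegral.integral_add ((by fun_prop : Continuous fun s:ℝ => s^4).intervalIntegrable _ _)
      ((by fun_prop : Continuous fun s:ℝ => (2*c)*s^2).intervalIntegrable _ _),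
    integral_pow, intervalIntegral.integral_const_mul, integral_pow,
    intervalIntegral.integral_const]
  push_cast
  simp only [smul_eq_mul]
  exact ⟨rfl, by ring⟩

lemma Z0map_differentiable (k l : ℕ) : Differentiable ℝ (Z0map k l) := by
  rw [Z0map_eq]
  have hns : Differentiable ℝ fun p : EuclideanSpace ℝ (Fin k) × ℝ => ‖p.1‖^2 :=
    ((contDiff_norm_sq ℝ (n := 1)).differentiable one_ne_zero).comp differentiable_fst
  have hA : Differentiable ℝ fun p : EuclideanSpace ℝ (Fin k) × ℝ => p.2 := differentiable_snd
  have h2 : Differentiable ℝ fun p : EuclideanSpace ℝ (Fin k) × ℝ =>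
      p.2^3 + 3*‖p.1‖^2*p.2 := (hA.pow 3).add ((hns.const_mul 3).mul hA)
  have h3 : Differentiable ℝ fun p : EuclideanSpace ℝ (Fin k) × ℝ =>
      (1/5)*p.2^5 + (2/3)*‖p.1‖^2*p.2^3 + (‖p.1‖^2)^2*p.2 :=
    by
    have h3a : Differentiable ℝ fun p : EuclideanSpace ℝ (Fin k) × ℝ => (1/5)*p.2^5 :=
      (hA.pow 5).const_mul _
    have h3b : Differentiable ℝ fun p : EuclideanSpace ℝ (Fin k) × ℝ =>
        (2/3)*‖p.1‖^2*p.2^3 := (hns.const_mul _).mul (hA.pow 3)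
    have h3c : Differentiable ℝ fun p : EuclideanSpace ℝ (Fin k) × ℝ =>
        (‖p.1‖^2)^2*p.2 := (hns.pow 2).mul hA
    exact (h3a.add h3b).add h3c
  exact differentiable_fst.prodMk (h2.prodMk (h3.prodMk (differentiable_const 0)))

lemma Z0map_fderiv_dir (k l : ℕ) (p : EuclideanSpace ℝ (Fin k) × ℝ) :
    fderiv ℝ (Z0map k l) p (0, 1) =
      (0, 3*p.2^2 + 3*‖p.1‖^2, p.2^4 + 2*‖p.1‖^2*p.2^2 + (‖p.1‖^2)^2, 0) := by
  set c := ‖p.1‖^2 with hc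
  have hD : HasFDerivAt (Z0map k l) (fderiv ℝ (Z0map k l) p) p :=
    (Z0map_differentiable k l p).hasFDerivAt
  have hline : HasDerivAt (fun t : ℝ => (p.1, t)) ((0 : EuclideanSpace ℝ (Fin k)), (1:ℝ)) p.2 :=
    (hasDerivAt_const _ _).prodMk (hasDerivAt_id _)
  have h1 : HasDerivAt (fun t : ℝ => Z0map k l (p.1, t))
      (fderiv ℝ (Z0map k l) p (0, 1)) p.2 := by
    have := hD.comp_hasDerivAt p.2 (by simpa using hline)
    exact this
  have h2a : HasDerivAt (fun t : ℝ => t^3 + 3*c*t) (3*p.2^2 + 3*c) p.2 := by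
    have := (hasDerivAt_pow 3 p.2).add ((hasDerivAt_id p.2).const_mul (3*c))
    exact this.congr_deriv (by rw [show (3:ℕ)-1 = 2 from rfl]; push_cast; ring)
  have h2b : HasDerivAt (fun t : ℝ => (1/5)*t^5 + (2/3)*c*t^3 + c^2*t)
      (p.2^4 + 2*c*p.2^2 + c^2) p.2 := by
    have := (((hasDerivAt_pow 5 p.2).const_mul (1/5)).add
      ((hasDerivAt_pow 3 p.2).const_mul ((2/3)*c))).add
      ((hasDerivAt_id p.2).const_mul (c^2))
    exact this.congr_deriv (by rw [show (3:ℕ)-1 = 2 from rfl, show (5:ℕ)-1 = 4 from rfl]; push_cast; ring)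
  have hfun : (fun t : ℝ => Z0map k l (p.1, t)) =
      fun t : ℝ => ((p.1 : EuclideanSpace ℝ (Fin k)), t^3 + 3*c*t,
        (1/5)*t^5 + (2/3)*c*t^3 + c^2*t, (0 : EuclideanSpace ℝ (Fin l))) := by
    funext t
    rw [Z0map_eq]
  have h2 : HasDerivAt (fun t : ℝ => Z0map k l (p.1, t))
      ((0 : EuclideanSpace ℝ (Fin k)), 3*p.2^2 + 3*c, p.2^4 + 2*c*p.2^2 + c^2,
        (0 : EuclideanSpace ℝ (Fin l))) p.2 := by
    rw [hfun]
    exact (hasDerivAt_const _ _).prodMk (h2a.prodMk (h2b.prodMk (hasDerivAt_const _ _)))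
  exact h1.unique h2

/-- For `n < m`, the embryo model `Z₀(n,m)` is injective on all of `ℝⁿ`, and
its derivative at `(y,z)` is injective iff `(y,z) ≠ (0,0)`: its singular set
is exactly the origin. -/
theorem Z0map_injective_and_fderiv_injective_iff (n m : ℕ) (hn : 1 ≤ n) (hnm : n < m) :
    Function.Injective (Z0map (n - 1) (m - n - 1)) ∧
    ∀ p : EuclideanSpace ℝ (Fin (n - 1)) × ℝ,
      (Function.Injective ⇑(fderiv ℝ (Z0map (n - 1) (m - n - 1)) p) ↔ p ≠ 0) := by
  set k := n - 1
  set l := m - n - 1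
  constructor
  · intro p q h
    have h1 : p.1 = q.1 := congrArg (fun x => x.1) h
    have h2 : p.2^3 + 3*‖p.1‖^2*p.2 = q.2^3 + 3*‖q.1‖^2*q.2 :=
      congrArg (fun x => x.2.1) h
    rw [h1] at h2
    have hm : StrictMono (fun z : ℝ => z^3 + 3*‖q.1‖^2*z) :=
      (Odd.strictMono_pow (by decide)).add_monotone
        (monotone_id.const_mul (by positivity))
    exact Prod.ext h1 (hm.injective h2)
  · intro p
    constructor
    · intro hinj hp0
      have h0 : fderiv ℝ (Z0map k l) p ((0 : EuclideanSpace ℝ (Fin k)), (1:ℝ)) =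
          fderiv ℝ (Z0map k l) p 0 := by
        rw [map_zero, Z0map_fderiv_dir, hp0]
        simp [Prod.ext_iff]
      have := hinj h0
      simp [Prod.ext_iff] at this
    · intro hp
      rw [injective_iff_map_eq_zero]
      intro u hu
      set D := fderiv ℝ (Z0map k l) p with hDdef
      have hD : HasFDerivAt (Z0map k l) D p := (Z0map_differentiable k l p).hasFDerivAt
      have hfstD : HasFDerivAt (Prod.fst ∘ Z0map k l)
          ((ContinuousLinearMap.fst ℝ (EuclideanSpace ℝ (Fin k))
            (ℝ × ℝ × EuclideanSpace ℝ (Fin l))).comp D) p :=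
        hasFDerivAt_fst.comp p hD
      have hcomp : (Prod.fst ∘ Z0map k l) = Prod.fst := rfl
      rw [hcomp] at hfstD
      have hfst_eq := hfstD.unique hasFDerivAt_fst
      have hu1 : u.1 = 0 := by
        have := congrArg (fun L => L u) hfst_eq
        simp only [ContinuousLinearMap.comp_apply, ContinuousLinearMap.coe_fst'] at this
        rw [hu] at this
        simpa using this.symm
      have hor : p.1 ≠ 0 ∨ p.2 ≠ 0 := by
        rcases eq_or_ne p.1 0 with h1 | h1
        · exact Or.inr fun h2 => hp (Prod.ext h1 h2)
        · exact Or.inl h1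
      have hpos : 0 < 3*p.2^2 + 3*‖p.1‖^2 := by
        have hA : (0:ℝ) ≤ 3*p.2^2 := by positivity
        have hB : (0:ℝ) ≤ 3*‖p.1‖^2 := by positivity
        rcases hor with h | h
        · have h1 : 0 < ‖p.1‖ := norm_pos_iff.mpr h
          nlinarith
        · nlinarith [sq_pos_of_ne_zero h]
      have husmul : u = u.2 • ((0 : EuclideanSpace ℝ (Fin k)), (1:ℝ)) := by
        rw [Prod.smul_mk, smul_zero, smul_eq_mul, mul_one]
        exact Prod.ext hu1 rfl
      have hDu : D u = u.2 • D (0, 1) := by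
        nth_rewrite 1 [husmul]
        rw [map_smul]
      rw [hu, hDdef, Z0map_fderiv_dir] at hDu
      have h21 : (0:ℝ) = u.2 * (3*p.2^2 + 3*‖p.1‖^2) := by
        have := congrArg (fun x => x.2.1) hDu
        simpa using this
      have hu2 : u.2 = 0 := by
        rcases mul_eq_zero.mp h21.symm with h | h
        · exact h
        · exact absurd h hpos.ne'
      rw [husmul, hu2, zero_smul]
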